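/- Let R be an associative unital ring, let p ∈ R satisfy p² = p, and let a, w, b, c ∈ R satisfy a + w + b + c = 1. Then [a+w, b, c]_p − [a, b+w, c]_p = (pcp)(pwp) − (pwp)(pcp). -/
import Mathlib


/-- The antisymmetrized triple product `[a,b,c]_p` from the partition–idempotent pairing. -/
def tripleBracket {R : Type*} [Ring R] (a b c p : R) : R :=
  a*p*b*p*c*p + b*p*c*p*a*p + c*p*a*p*b*p - c*p*b*p*a*p - b*p*a*p*c*p - a*p*c*p*b*p

/-- Cobordism invariance, algebraic form: if `p` is idempotent and `a + w + b + c = 1`, then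
`[a+w,b,c]_p − [a,b+w,c]_p = (pcp)(pwp) − (pwp)(pcp)`. -/
theorem tripleBracket_cobordism {R : Type*} [Ring R] (p a w b c : R)
    (hp : p * p = p) (h : a + w + b + c = 1) :
    tripleBracket (a + w) b c p - tripleBracket a (b + w) c p
      = (p*c*p) * (p*w*p) - (p*w*p) * (p*c*p) := by
  have ha : a = 1 - w - b - c := by rw [← h]; abel
  subst ha
  have hp' : ∀ x : R, p * (p * x) = p * x := fun x => by rw [← mul_assoc, hp]
  simp only [tripleBracket, mul_add, add_mul, sub_mul, mul_sub, one_mul, mul_one,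
    mul_assoc, hp, hp']
  abel
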